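/- arXiv:0711.0899 — 2 statements merged into one kernel-verified Lean document; each statement's English description precedes it below -/
import Mathlib

section
/- If P ∈ ℚ[x_1,…,x_n,y_1,…,y_n] is homogeneous of positive degree and invariant under the diagonal action of the symmetric group S_n (each permutation σ acting simultaneously by x_i ↦ x_{σ(i)} and y_i ↦ y_{σ(i)}), then P(∂)Δ_μ = 0. -/
open MvPolynomial

noncomputable section

/-- Partial derivatives with respect to two variables commute. -/
lemma pderiv_pderiv_comm {σ : Type*} (i j : σ) (f : MvPolynomial σ ℚ) :
    pderiv i (pderiv j f) = pderiv j (pderiv i f) := by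
  classical
  rcases eq_or_ne i j with rfl | hij
  · rfl
  · induction f using MvPolynomial.induction_on' with
    | monomial s a =>
      simp only [pderiv_monomial, Finsupp.coe_tsub, Pi.sub_apply, Finsupp.single_apply,
        if_neg hij, if_neg (Ne.symm hij), Nat.sub_zero]
      rw [tsub_tsub, tsub_tsub, add_comm, mul_right_comm]
    | add p q hp hq => simp [hp, hq]

lemma pderiv_commute {σ : Type*} (i j : σ) :
    Commute ((pderiv i).toLinearMap : Module.End ℚ (MvPolynomial σ ℚ))
      (pderiv j).toLinearMap := by
  apply LinearMap.ext
  intro f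
  simpa only [Module.End.mul_apply, Derivation.coeFn_coe] using pderiv_pderiv_comm i j f

/-- The monomial differential operator `∂^d = ∏ᵢ (∂/∂zᵢ)^(dᵢ)`. -/
def Dmon {σ : Type*} [DecidableEq σ] (d : σ →₀ ℕ) :
    Module.End ℚ (MvPolynomial σ ℚ) :=
  d.support.noncommProd
    (fun i => ((pderiv i).toLinearMap : Module.End ℚ (MvPolynomial σ ℚ)) ^ d i)
    fun i _ j _ _ => Commute.pow_pow (pderiv_commute i j) _ _

/-- `P(∂) Q` : the differential operator associated with `P` (substituting `∂/∂zᵢ`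
for each variable `zᵢ`) applied to `Q`. -/
def DP {σ : Type*} [DecidableEq σ] (P Q : MvPolynomial σ ℚ) : MvPolynomial σ ℚ :=
  Finsupp.sum (AddMonoidAlgebra.coeff P) fun d c => c • Dmon d Q

namespace HookOp

variable {σ : Type*} [DecidableEq σ]

abbrev pd (i : σ) : Module.End ℚ (MvPolynomial σ ℚ) := (pderiv i).toLinearMap

lemma pd_comm_pow (a b : σ → ℕ) :
    (Set.univ : Set σ).Pairwise (Function.onFun Commute fun i => pd i ^ a i) := by
  intro i _ j _ _
  exact Commute.pow_pow (pderiv_commute i j) _ _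

lemma Dmon_zero : Dmon (0 : σ →₀ ℕ) = 1 := by
  simp [Dmon]

lemma hcomm (d : σ →₀ ℕ) (s : Finset σ) :
    (↑s : Set σ).Pairwise (Function.onFun Commute fun i => pd i ^ d i) :=
  fun i _ j _ _ => Commute.pow_pow (pderiv_commute i j) _ _

lemma Dmon_single (i : σ) (k : ℕ) : Dmon (Finsupp.single i k) = pd i ^ k := by
  rcases eq_or_ne k 0 with rfl | hk
  · simp [Dmon]
  · rw [Dmon]
    refine (Finset.noncommProd_congr (Finsupp.support_single_ne_zero i hk)
      (fun x _ => rfl) _).trans ?_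
    rw [Finset.noncommProd_singleton]
    simp

lemma Dmon_eq_univ [Fintype σ] (d : σ →₀ ℕ) :
    Dmon d = (Finset.univ : Finset σ).noncommProd (fun i => pd i ^ d i) (hcomm d _) := by
  have hone : ∀ x ∈ d.supportᶜ, pd x ^ d x = (1 : Module.End ℚ (MvPolynomial σ ℚ)) := by
    intro x hx
    simp only [Finset.mem_compl, Finsupp.mem_support_iff, not_not] at hx
    simp [hx]
  symm
  calc (Finset.univ : Finset σ).noncommProd (fun i => pd i ^ d i) (hcomm d _)
      = (d.support ∪ d.supportᶜ).noncommProd (fun i => pd i ^ d i) (hcomm d _) :=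
        Finset.noncommProd_congr (Finset.union_compl _).symm (fun _ _ => rfl) _
    _ = d.support.noncommProd (fun i => pd i ^ d i) _ *
          d.supportᶜ.noncommProd (fun i => pd i ^ d i) _ :=
        Finset.noncommProd_union_of_disjoint disjoint_compl_right _ _
    _ = Dmon d := by
        rw [Finset.noncommProd_eq_pow_card _ _ _ 1 hone, one_pow, mul_one]
        rfl

lemma Dmon_add [Fintype σ] (a b : σ →₀ ℕ) : Dmon (a + b) = Dmon a * Dmon b := by
  rw [Dmon_eq_univ (a + b), Dmon_eq_univ a, Dmon_eq_univ b]
  have cgf : (↑(Finset.univ : Finset σ) : Set σ).Pairwise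
      (fun x y => Commute ((fun i => pd i ^ b i) x) ((fun i => pd i ^ a i) y)) :=
    fun i _ j _ _ => Commute.pow_pow (pderiv_commute i j) _ _
  have hdist := Finset.noncommProd_mul_distrib (s := (Finset.univ : Finset σ))
    (fun i => pd i ^ a i) (fun i => pd i ^ b i) (hcomm a _) (hcomm b _) cgf
  refine Eq.trans ?_ hdist
  exact Finset.noncommProd_congr rfl (fun x _ => by simp [pow_add]) _


lemma DP_monomial (d : σ →₀ ℕ) (c : ℚ) (Q : MvPolynomial σ ℚ) :
    DP (monomial d c) Q = c • Dmon d Q := by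
  rw [DP]
  exact Finsupp.sum_single_index (by simp)

lemma DP_add_left (P P' Q : MvPolynomial σ ℚ) :
    DP (P + P') Q = DP P Q + DP P' Q := by
  rw [DP, DP, DP]
  exact Finsupp.sum_add_index' (fun _ => by simp) (fun _ _ _ => by rw [add_smul])

lemma DP_smul_left (c : ℚ) (P Q : MvPolynomial σ ℚ) :
    DP (c • P) Q = c • DP P Q := by
  rw [DP, DP, AddMonoidAlgebra.coeff_smul, Finsupp.sum_smul_index' (fun i => by simp)]
  rw [Finsupp.smul_sum]
  exact Finsupp.sum_congr (fun d _ => by rw [smul_eq_mul, mul_smul])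

lemma DP_zero_left (Q : MvPolynomial σ ℚ) : DP 0 Q = 0 := by
  simp [DP]

lemma DP_sum_left {α : Type*} (s : Finset α) (F : α → MvPolynomial σ ℚ)
    (Q : MvPolynomial σ ℚ) : DP (∑ a ∈ s, F a) Q = ∑ a ∈ s, DP (F a) Q := by
  classical
  induction s using Finset.cons_induction with
  | empty => simp [DP_zero_left]
  | cons a s ha ih => rw [Finset.sum_cons, Finset.sum_cons, DP_add_left, ih]

lemma DP_zero_right (P : MvPolynomial σ ℚ) : DP P 0 = 0 := by
  rw [DP]
  exact Finset.sum_eq_zero (fun d _ => by simp)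

lemma pd_pow_monomial (i : σ) (k : ℕ) (e : σ →₀ ℕ) (c : ℚ) :
    (pd i ^ k) (monomial e c) =
      monomial (e - Finsupp.single i k) (c * ((e i).descFactorial k : ℚ)) := by
  induction k with
  | zero => simp
  | succ k ih =>
    rw [pow_succ', Module.End.mul_apply, ih]
    show pderiv i _ = _
    rw [pderiv_monomial]
    congr 1
    · rw [tsub_tsub, ← Finsupp.single_add]
    · rw [Finsupp.tsub_apply, Finsupp.single_eq_same, Nat.descFactorial_succ]
      push_cast [mul_assoc, mul_comm]
      ring

lemma Dmon_monomial [Fintype σ] (d e : σ →₀ ℕ) (c : ℚ) :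
    Dmon d (monomial e c) =
      monomial (e - d) (c * ∏ u, ((e u).descFactorial (d u) : ℚ)) := by
  induction d using Finsupp.induction with
  | zero => simp [Dmon_zero]
  | single_add i k f hif hk ih =>
    rw [Dmon_add, Module.End.mul_apply, ih, Dmon_single, pd_pow_monomial]
    have hfi : f i = 0 := by simpa [Finsupp.mem_support_iff] using hif
    have he : (e - f) i = e i := by
      rw [Finsupp.tsub_apply, hfi, Nat.sub_zero]
    have key : ∏ u, (((e u).descFactorial ((Finsupp.single i k + f) u)) : ℚ) =
        ((e i).descFactorial k : ℚ) * ∏ u, (((e u).descFactorial (f u)) : ℚ) := by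
      rw [← Finset.mul_prod_erase Finset.univ
          (fun u => (((e u).descFactorial ((Finsupp.single i k + f) u)) : ℚ))
          (Finset.mem_univ i),
        ← Finset.mul_prod_erase Finset.univ
          (fun u => (((e u).descFactorial (f u)) : ℚ)) (Finset.mem_univ i)]
      rw [show ((Finsupp.single i k + f) i) = k by
        rw [Finsupp.add_apply, Finsupp.single_eq_same, hfi, Nat.add_zero]]
      rw [hfi, Nat.descFactorial_zero, Nat.cast_one, one_mul]
      congr 1
      exact Finset.prod_congr rfl (fun u hu => by
        rw [Finsupp.add_apply, Finsupp.single_apply,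
          if_neg (by exact fun h => (Finset.mem_erase.mp hu).1 h.symm), Nat.zero_add])
    congr 1
    · rw [tsub_tsub, add_comm]
    · rw [he, key]
      ring

lemma DP_mul [Fintype σ] (P Q R : MvPolynomial σ ℚ) :
    DP (P * Q) R = DP P (DP Q R) := by
  induction P using MvPolynomial.induction_on' with
  | add p q hp hq => rw [add_mul, DP_add_left, hp, hq, DP_add_left]
  | monomial u a =>
    induction Q using MvPolynomial.induction_on' with
    | add p q hp hq =>
      rw [mul_add, DP_add_left, hp, hq, DP_add_left, DP_monomial, DP_monomial,
        DP_monomial, map_add, smul_add]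
    | monomial v b =>
      rw [monomial_mul, DP_monomial, DP_monomial, DP_monomial, Dmon_add,
        Module.End.mul_apply, map_smul, smul_smul]

lemma monomial_prod {α : Type*} (s : Finset α) (f : α → (σ →₀ ℕ)) :
    (∏ a ∈ s, monomial (f a) (1 : ℚ)) = monomial (∑ a ∈ s, f a) 1 := by
  classical
  induction s using Finset.cons_induction with
  | empty => simp
  | cons a s ha ih =>
    rw [Finset.prod_cons, Finset.sum_cons, ih, monomial_mul, mul_one]

end HookOp

/-- `x`-exponents of the biexponents of the hook `(K+1,1^L)`, listed in lexicographic
order: `(0,0),(0,1),…,(0,K),(1,0),(2,0),…,(L,0)`. -/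
def hookP (K L : ℕ) (j : Fin (K + L + 1)) : ℕ :=
  if (j : ℕ) ≤ K then 0 else (j : ℕ) - K

/-- `y`-exponents of the biexponents of the hook `(K+1,1^L)`. -/
def hookQ (K L : ℕ) (j : Fin (K + L + 1)) : ℕ :=
  if (j : ℕ) ≤ K then (j : ℕ) else 0

/-- `Δ_μ = det (xᵢ^(p_j) yᵢ^(q_j))` for the hook `μ = (K+1,1^L)` of `n = K+L+1`;
the variable `Sum.inl i` is `xᵢ` and `Sum.inr i` is `yᵢ`. -/
def Delta (K L : ℕ) : MvPolynomial (Fin (K + L + 1) ⊕ Fin (K + L + 1)) ℚ :=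
  Matrix.det fun i j =>
    X (Sum.inl i) ^ hookP K L j * X (Sum.inr i) ^ hookQ K L j

section HookSec

open HookOp

variable (K L : ℕ)

/-- exponent of the monomial `xᵢ^(v.1) yᵢ^(v.2)`. -/
def pAt (v : ℕ × ℕ) (i : Fin (K+L+1)) : (Fin (K+L+1) ⊕ Fin (K+L+1)) →₀ ℕ :=
  Finsupp.single (Sum.inl i) v.1 + Finsupp.single (Sum.inr i) v.2

/-- exponent of the matrix entry at row `i`, column `j`. -/
def wE (i j : Fin (K+L+1)) : (Fin (K+L+1) ⊕ Fin (K+L+1)) →₀ ℕ :=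
  pAt K L (hookP K L j, hookQ K L j) i

/-- exponent of the monomial of `Delta` attached to the permutation `σ`. -/
def Eex (σ : Equiv.Perm (Fin (K+L+1))) : (Fin (K+L+1) ⊕ Fin (K+L+1)) →₀ ℕ :=
  ∑ j, wE K L (σ j) j

lemma entry_eq (i j : Fin (K+L+1)) :
    (X (Sum.inl i) ^ hookP K L j * X (Sum.inr i) ^ hookQ K L j :
      MvPolynomial (Fin (K+L+1) ⊕ Fin (K+L+1)) ℚ) = monomial (wE K L i j) 1 := by
  rw [X_pow_eq_monomial, X_pow_eq_monomial, monomial_mul, mul_one]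
  rfl

lemma Delta_eq :
    Delta K L = ∑ σ : Equiv.Perm (Fin (K+L+1)),
      monomial (Eex K L σ) (((Equiv.Perm.sign σ : ℤ) : ℚ)) := by
  rw [Delta, show (Matrix.det fun i j =>
      X (Sum.inl i) ^ hookP K L j * X (Sum.inr i) ^ hookQ K L j :
        MvPolynomial (Fin (K+L+1) ⊕ Fin (K+L+1)) ℚ) = Matrix.det (Matrix.of fun i j =>
      X (Sum.inl i) ^ hookP K L j * X (Sum.inr i) ^ hookQ K L j) from rfl, Matrix.det_apply]
  refine Finset.sum_congr rfl (fun σ _ => ?_)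
  simp only [Matrix.of_apply]
  have : (∏ i, (X (Sum.inl (σ i)) ^ hookP K L i * X (Sum.inr (σ i)) ^ hookQ K L i :
      MvPolynomial (Fin (K+L+1) ⊕ Fin (K+L+1)) ℚ)) = monomial (Eex K L σ) 1 := by
    rw [show (∏ i, (X (Sum.inl (σ i)) ^ hookP K L i * X (Sum.inr (σ i)) ^ hookQ K L i :
        MvPolynomial (Fin (K+L+1) ⊕ Fin (K+L+1)) ℚ)) =
        ∏ i, monomial (wE K L (σ i) i) (1:ℚ) from
      Finset.prod_congr rfl (fun i _ => entry_eq K L (σ i) i)]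
    rw [monomial_prod]
    rfl
  rw [this, Units.smul_def, ← Int.cast_smul_eq_zsmul ℚ, smul_monomial, smul_eq_mul, mul_one]

lemma Eex_inl (σ : Equiv.Perm (Fin (K+L+1))) (j : Fin (K+L+1)) :
    Eex K L σ (Sum.inl (σ j)) = hookP K L j := by
  rw [Eex, Finsupp.finset_sum_apply]
  rw [Finset.sum_eq_single j (fun t _ ht => ?_) (by simp)]
  · simp [wE, pAt]
  · simp only [wE, pAt, Finsupp.add_apply, Finsupp.single_apply]
    rw [if_neg (by simp [ht]), if_neg (by simp)]
    simp

lemma Eex_inr (σ : Equiv.Perm (Fin (K+L+1))) (j : Fin (K+L+1)) :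
    Eex K L σ (Sum.inr (σ j)) = hookQ K L j := by
  rw [Eex, Finsupp.finset_sum_apply]
  rw [Finset.sum_eq_single j (fun t _ ht => ?_) (by simp)]
  · simp [wE, pAt]
  · simp only [wE, pAt, Finsupp.add_apply, Finsupp.single_apply]
    rw [if_neg (by simp), if_neg (by simp [ht])]
    simp

lemma hook_step (j : Fin (K+L+1)) (v : ℕ × ℕ) (hv : v ≠ (0,0))
    (hP : v.1 ≤ hookP K L j) (hQ : v.2 ≤ hookQ K L j) :
    ∃ j' : Fin (K+L+1), j' ≠ j ∧ hookP K L j' = hookP K L j - v.1 ∧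
      hookQ K L j' = hookQ K L j - v.2 := by
  by_cases hj : (j : ℕ) ≤ K
  · -- column part : hookP j = 0, so v.1 = 0 and v.2 ≥ 1
    have h1 : v.1 = 0 := by simpa [hookP, hj] using hP
    have hQ' : v.2 ≤ (j : ℕ) := by simpa [hookQ, hj] using hQ
    have h2 : v.2 ≠ 0 := by
      intro h
      exact hv (Prod.ext h1 h)
    refine ⟨⟨(j : ℕ) - v.2, by omega⟩, ?_, ?_, ?_⟩
    · exact Fin.ne_of_val_ne (by simp; omega)
    · simp only [hookP]
      rw [if_pos (by simp; omega), if_pos hj, h1]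
    · simp only [hookQ]
      rw [if_pos (by simp; omega), if_pos hj]
  · -- row part : hookQ j = 0, so v.2 = 0 and v.1 ≥ 1
    have h2 : v.2 = 0 := by simpa [hookQ, hj] using hQ
    have hP' : v.1 ≤ (j : ℕ) - K := by simpa [hookP, hj] using hP
    have h1 : v.1 ≠ 0 := by
      intro h
      exact hv (Prod.ext h h2)
    by_cases hc : v.1 = (j : ℕ) - K
    · refine ⟨⟨0, by omega⟩, ?_, ?_, ?_⟩
      · exact Fin.ne_of_val_ne (by simp; omega)
      · simp only [hookP]
        rw [if_pos (by simp), if_neg hj]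
        omega
      · simp only [hookQ]
        rw [if_pos (by simp), if_neg hj]
        omega
    · refine ⟨⟨(j : ℕ) - v.1, by omega⟩, ?_, ?_, ?_⟩
      · exact Fin.ne_of_val_ne (by simp; omega)
      · simp only [hookP]
        rw [if_neg (by simp; omega), if_neg hj]
        omega
      · simp only [hookQ]
        rw [if_neg (by simp; omega), if_neg hj]
        omega

lemma pAt_le_wE (v : ℕ × ℕ) (i j : Fin (K+L+1))
    (hP : v.1 ≤ hookP K L j) (hQ : v.2 ≤ hookQ K L j) :
    pAt K L v i ≤ wE K L i j := by
  rw [Finsupp.le_def]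
  intro u
  rcases u with a | a <;>
    simp only [pAt, wE, Finsupp.add_apply, Finsupp.single_apply] <;>
    split_ifs <;> simp_all

lemma wE_sub (v : ℕ × ℕ) (i j j' : Fin (K+L+1))
    (hP' : hookP K L j' = hookP K L j - v.1)
    (hQ' : hookQ K L j' = hookQ K L j - v.2) :
    wE K L i j - pAt K L v i = wE K L i j' := by
  ext u
  rw [Finsupp.tsub_apply]
  rcases u with a | a <;>
    simp only [pAt, wE, Finsupp.add_apply, Finsupp.single_apply] <;>
    split_ifs <;> simp_all

lemma crux (σ : Equiv.Perm (Fin (K+L+1))) (v : ℕ × ℕ) (j j' : Fin (K+L+1))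
    (hne : j' ≠ j)
    (hP : v.1 ≤ hookP K L j) (hQ : v.2 ≤ hookQ K L j)
    (hP' : hookP K L j' = hookP K L j - v.1)
    (hQ' : hookQ K L j' = hookQ K L j - v.2) :
    Eex K L (σ * Equiv.swap j j') - pAt K L v (σ j') =
      Eex K L σ - pAt K L v (σ j) := by
  classical
  set s := Equiv.swap j j' with hs_def
  have hpair : ({j, j'} : Finset (Fin (K+L+1))) ⊆ Finset.univ := Finset.subset_univ _
  set R := ∑ t ∈ (Finset.univ \ {j, j'}), wE K L (σ t) t with hR
  have hs : Eex K L (σ * s) = ∑ t, wE K L (σ t) (s t) := by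
    rw [Eex, ← Equiv.sum_comp s (fun t => wE K L (σ t) (s t))]
    refine Finset.sum_congr rfl fun t _ => by
      simp [hs_def, Equiv.Perm.mul_apply, Equiv.swap_apply_self]
  have hsplit1 : Eex K L σ = R + (wE K L (σ j) j + wE K L (σ j') j') := by
    rw [Eex, ← Finset.sum_sdiff hpair, Finset.sum_pair hne.symm]
  have hsplit2 : Eex K L (σ * s) = R + (wE K L (σ j) j' + wE K L (σ j') j) := by
    rw [hs, ← Finset.sum_sdiff hpair, Finset.sum_pair hne.symm]
    congr 1
    · exact Finset.sum_congr rfl fun t ht => by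
        have h1 : t ≠ j := by
          simp only [Finset.mem_sdiff, Finset.mem_insert, Finset.mem_singleton] at ht
          tauto
        have h2 : t ≠ j' := by
          simp only [Finset.mem_sdiff, Finset.mem_insert, Finset.mem_singleton] at ht
          tauto
        rw [hs_def, Equiv.swap_apply_of_ne_of_ne h1 h2]
    · rw [hs_def, Equiv.swap_apply_left, Equiv.swap_apply_right]
  have hle1 : pAt K L v (σ j') ≤ wE K L (σ j') j := pAt_le_wE K L v _ _ hP hQ
  have hle2 : pAt K L v (σ j) ≤ wE K L (σ j) j := pAt_le_wE K L v _ _ hP hQ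
  rw [hsplit1, hsplit2]
  rw [← add_assoc, add_tsub_assoc_of_le hle1, wE_sub K L v _ _ _ hP' hQ']
  rw [show wE K L (σ j) j + wE K L (σ j') j' = wE K L (σ j') j' + wE K L (σ j) j from
    add_comm _ _, ← add_assoc, add_tsub_assoc_of_le hle2,
    wE_sub K L v _ _ _ hP' hQ']
  abel

lemma pAt_inl (v : ℕ × ℕ) (i : Fin (K+L+1)) : pAt K L v i (Sum.inl i) = v.1 := by
  simp [pAt]

lemma pAt_inr (v : ℕ × ℕ) (i : Fin (K+L+1)) : pAt K L v i (Sum.inr i) = v.2 := by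
  simp [pAt]

lemma Dmon_pAt (v : ℕ × ℕ) (i : Fin (K+L+1))
    (e : (Fin (K+L+1) ⊕ Fin (K+L+1)) →₀ ℕ) (c : ℚ) :
    Dmon (pAt K L v i) (monomial e c) =
      monomial (e - pAt K L v i)
        (c * (((e (Sum.inl i)).descFactorial v.1 : ℚ) *
          ((e (Sum.inr i)).descFactorial v.2 : ℚ))) := by
  rw [Dmon_monomial]
  congr 1
  rw [Fintype.prod_sum_type]
  congr 1
  congr 1
  · refine (Finset.prod_eq_single i (fun b _ hb => ?_)
        (fun h => absurd (Finset.mem_univ i) h)).trans ?_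
    · have : pAt K L v i (Sum.inl b) = 0 := by
        simp [pAt, Finsupp.single_apply, (Ne.symm hb : ¬ i = b)]
      rw [this]
      simp
    · rw [pAt_inl]
  · refine (Finset.prod_eq_single i (fun b _ hb => ?_)
        (fun h => absurd (Finset.mem_univ i) h)).trans ?_
    · have : pAt K L v i (Sum.inr b) = 0 := by
        simp [pAt, Finsupp.single_apply, (Ne.symm hb : ¬ i = b)]
      rw [this]
      simp
    · rw [pAt_inr]

lemma psum_kills (v : ℕ × ℕ) (hv : v ≠ (0,0)) :
    DP (∑ i, monomial (pAt K L v i) (1:ℚ)) (Delta K L) = 0 := by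
  classical
  rw [DP_sum_left]
  have h1 : ∀ i, DP (monomial (pAt K L v i) (1:ℚ)) (Delta K L) =
      ∑ σ : Equiv.Perm (Fin (K+L+1)),
        Dmon (pAt K L v i) (monomial (Eex K L σ) (((Equiv.Perm.sign σ : ℤ) : ℚ))) := by
    intro i
    rw [DP_monomial, one_smul, Delta_eq, map_sum]
  rw [Finset.sum_congr rfl (fun i _ => h1 i), Finset.sum_comm]
  rw [Finset.sum_congr rfl (fun (σ : Equiv.Perm (Fin (K+L+1))) _ =>
    (Equiv.sum_comp σ (fun i => Dmon (pAt K L v i)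
      (monomial (Eex K L σ) (((Equiv.Perm.sign σ : ℤ) : ℚ))))).symm)]
  rw [Finset.sum_comm]
  refine Finset.sum_eq_zero (fun j _ => ?_)
  have hform : ∀ σ : Equiv.Perm (Fin (K+L+1)),
      Dmon (pAt K L v (σ j)) (monomial (Eex K L σ) (((Equiv.Perm.sign σ : ℤ) : ℚ))) =
      monomial (Eex K L σ - pAt K L v (σ j))
        ((((Equiv.Perm.sign σ : ℤ) : ℚ)) *
          (((hookP K L j).descFactorial v.1 : ℚ) *
            ((hookQ K L j).descFactorial v.2 : ℚ))) := by
    intro σ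
    rw [Dmon_pAt, Eex_inl, Eex_inr]
  rw [Finset.sum_congr rfl (fun σ _ => hform σ)]
  by_cases hP : v.1 ≤ hookP K L j
  · by_cases hQ : v.2 ≤ hookQ K L j
    · -- cancellation via the involution σ ↦ σ * swap j j'
      obtain ⟨j', hne, hP', hQ'⟩ := hook_step K L j v hv hP hQ
      set C : ℚ := (((hookP K L j).descFactorial v.1 : ℚ) *
            ((hookQ K L j).descFactorial v.2 : ℚ)) with hC
      refine Finset.sum_involution
        (fun σ _ => σ * Equiv.swap j j') (fun σ _ => ?_) (fun σ _ _ => ?_)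
        (fun σ _ => Finset.mem_univ _) (fun σ _ => ?_)
      · -- terms cancel
        have hexp : Eex K L (σ * Equiv.swap j j') -
            pAt K L v ((σ * Equiv.swap j j') j) =
            Eex K L σ - pAt K L v (σ j) := by
          rw [show (σ * Equiv.swap j j') j = σ j' by
            rw [Equiv.Perm.mul_apply, Equiv.swap_apply_left]]
          exact crux K L σ v j j' hne hP hQ hP' hQ'
        rw [hexp, ← map_add]
        have hsgn : ((Equiv.Perm.sign (σ * Equiv.swap j j') : ℤ) : ℚ) =
            -(((Equiv.Perm.sign σ : ℤ) : ℚ)) := by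
          rw [Equiv.Perm.sign_mul, Equiv.Perm.sign_swap (Ne.symm hne)]
          push_cast
          ring
        rw [hsgn]
        rw [show ((Equiv.Perm.sign σ : ℤ) : ℚ) * C +
            -(((Equiv.Perm.sign σ : ℤ) : ℚ)) * C = 0 by ring]
        exact map_zero _
      · -- nontrivial involution
        intro h
        apply hne
        have h2 : Equiv.swap j j' = 1 := mul_left_cancel (a := σ)
          (by rw [mul_one]; exact h)
        have := congrArg (fun (τ : Equiv.Perm (Fin (K+L+1))) => τ j) h2
        simpa [Equiv.swap_apply_left] using this
      · -- involutive
        show σ * Equiv.swap j j' * Equiv.swap j j' = σ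
        rw [mul_assoc, Equiv.swap_mul_self, mul_one]
    · refine Finset.sum_eq_zero (fun σ _ => ?_)
      rw [show ((hookQ K L j).descFactorial v.2 : ℚ) = 0 by
        rw [Nat.descFactorial_eq_zero_iff_lt.mpr (lt_of_not_ge hQ)]; simp]
      rw [mul_zero, mul_zero, map_zero]
  · refine Finset.sum_eq_zero (fun σ _ => ?_)
    rw [show ((hookP K L j).descFactorial v.1 : ℚ) = 0 by
      rw [Nat.descFactorial_eq_zero_iff_lt.mpr (lt_of_not_ge hP)]; simp]
    rw [zero_mul, mul_zero, map_zero]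

/-- the diagonal action of a permutation on exponents. -/
def act (σ : Equiv.Perm (Fin (K+L+1))) (e : (Fin (K+L+1) ⊕ Fin (K+L+1)) →₀ ℕ) :
    (Fin (K+L+1) ⊕ Fin (K+L+1)) →₀ ℕ :=
  Finsupp.mapDomain (Sum.map ⇑σ ⇑σ) e

/-- symmetrization (with multiplicity) of the monomial with exponent `e`. -/
def Tsym (e : (Fin (K+L+1) ⊕ Fin (K+L+1)) →₀ ℕ) :
    MvPolynomial (Fin (K+L+1) ⊕ Fin (K+L+1)) ℚ :=
  ∑ σ : Equiv.Perm (Fin (K+L+1)), monomial (act K L σ e) (1:ℚ)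

/-- the set of "active" slots of an exponent. -/
def Act (e : (Fin (K+L+1) ⊕ Fin (K+L+1)) →₀ ℕ) : Finset (Fin (K+L+1)) :=
  Finset.univ.filter (fun i => e (Sum.inl i) ≠ 0 ∨ e (Sum.inr i) ≠ 0)

lemma mem_Act {e : (Fin (K+L+1) ⊕ Fin (K+L+1)) →₀ ℕ} {i : Fin (K+L+1)} :
    i ∈ Act K L e ↔ (e (Sum.inl i) ≠ 0 ∨ e (Sum.inr i) ≠ 0) := by
  simp [Act]

lemma act_add (σ : Equiv.Perm (Fin (K+L+1)))
    (e f : (Fin (K+L+1) ⊕ Fin (K+L+1)) →₀ ℕ) :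
    act K L σ (e + f) = act K L σ e + act K L σ f :=
  Finsupp.mapDomain_add

lemma act_pAt (σ : Equiv.Perm (Fin (K+L+1))) (v : ℕ × ℕ) (i : Fin (K+L+1)) :
    act K L σ (pAt K L v i) = pAt K L v (σ i) := by
  simp [act, pAt, Finsupp.mapDomain_add, Finsupp.mapDomain_single]

lemma act_mul (σ τ : Equiv.Perm (Fin (K+L+1)))
    (e : (Fin (K+L+1) ⊕ Fin (K+L+1)) →₀ ℕ) :
    act K L (σ * τ) e = act K L σ (act K L τ e) := by
  rw [act, act, act, show (Sum.map ⇑(σ * τ) ⇑(σ * τ)) =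
    (Sum.map ⇑σ ⇑σ) ∘ (Sum.map ⇑τ ⇑τ) from funext (fun u => by
      rcases u with a | a <;> simp [Equiv.Perm.mul_apply]),
    Finsupp.mapDomain_comp]

lemma act_fix (σ : Equiv.Perm (Fin (K+L+1)))
    (e : (Fin (K+L+1) ⊕ Fin (K+L+1)) →₀ ℕ)
    (h : ∀ i, (e (Sum.inl i) ≠ 0 ∨ e (Sum.inr i) ≠ 0) → σ i = i) :
    act K L σ e = e := by
  rw [act, show Finsupp.mapDomain (Sum.map ⇑σ ⇑σ) e = Finsupp.mapDomain id e from
    Finsupp.mapDomain_congr (fun u hu => ?_), Finsupp.mapDomain_id]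
  rcases u with a | a
  · have := h a (Or.inl (by simpa [Finsupp.mem_support_iff] using hu))
    simp [this]
  · have := h a (Or.inr (by simpa [Finsupp.mem_support_iff] using hu))
    simp [this]

lemma Tsym_mul (v : ℕ × ℕ) (f : (Fin (K+L+1) ⊕ Fin (K+L+1)) →₀ ℕ) :
    (∑ i, monomial (pAt K L v i) (1:ℚ)) * Tsym K L f =
      ∑ i, Tsym K L (f + pAt K L v i) := by
  rw [Finset.sum_mul]
  have h1 : ∀ i : Fin (K+L+1), monomial (pAt K L v i) (1:ℚ) * Tsym K L f =
      ∑ σ : Equiv.Perm (Fin (K+L+1)), monomial (pAt K L v i + act K L σ f) (1:ℚ) := by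
    intro i
    rw [Tsym, Finset.mul_sum]
    exact Finset.sum_congr rfl (fun σ _ => by rw [monomial_mul, one_mul])
  rw [Finset.sum_congr rfl (fun i _ => h1 i), Finset.sum_comm]
  have h2 : ∀ σ : Equiv.Perm (Fin (K+L+1)),
      (∑ i, monomial (pAt K L v i + act K L σ f) (1:ℚ)) =
      ∑ i, monomial (act K L σ (f + pAt K L v i)) (1:ℚ) := by
    intro σ
    rw [← Equiv.sum_comp σ (fun i => monomial (pAt K L v i + act K L σ f) (1:ℚ))]
    exact Finset.sum_congr rfl (fun i _ => by
      rw [act_add, act_pAt]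
      exact congrArg (fun t => monomial t (1:ℚ)) (add_comm _ _))
  rw [Finset.sum_congr rfl (fun σ _ => h2 σ), Finset.sum_comm]
  rfl

lemma Tsym_indep (v : ℕ × ℕ) (f : (Fin (K+L+1) ⊕ Fin (K+L+1)) →₀ ℕ)
    (a i : Fin (K+L+1)) (ha : a ∉ Act K L f) (hi : i ∉ Act K L f) :
    Tsym K L (f + pAt K L v a) = Tsym K L (f + pAt K L v i) := by
  classical
  rw [Tsym, Tsym, ← Equiv.sum_comp (Equiv.mulRight (Equiv.swap a i))
    (fun σ => monomial (act K L σ (f + pAt K L v a)) (1:ℚ))]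
  refine Finset.sum_congr rfl (fun τ _ => ?_)
  have hfix : act K L (Equiv.swap a i) f = f := by
    refine act_fix K L _ _ (fun b hb => ?_)
    have hba : b ≠ a := fun h => ha (by rw [← h]; exact (mem_Act K L).mpr hb)
    have hbi : b ≠ i := fun h => hi (by rw [← h]; exact (mem_Act K L).mpr hb)
    exact Equiv.swap_apply_of_ne_of_ne hba hbi
  rw [show (Equiv.mulRight (Equiv.swap a i)) τ = τ * Equiv.swap a i from rfl,
    act_mul, act_add, hfix, act_pAt, Equiv.swap_apply_left]

lemma Tkill : ∀ (r : ℕ) (e : (Fin (K+L+1) ⊕ Fin (K+L+1)) →₀ ℕ),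
    (Act K L e).card ≤ r → e ≠ 0 → DP (Tsym K L e) (Delta K L) = 0 := by
  intro r
  induction r with
  | zero =>
    intro e hcard hne
    exfalso
    obtain ⟨u, hu⟩ := Finsupp.ne_iff.mp hne
    have : ∃ i, i ∈ Act K L e := by
      rcases u with a | a
      · exact ⟨a, (mem_Act K L).mpr (Or.inl (by simpa using hu))⟩
      · exact ⟨a, (mem_Act K L).mpr (Or.inr (by simpa using hu))⟩
    obtain ⟨i, hi⟩ := this
    have := Finset.card_pos.mpr ⟨i, hi⟩
    omega
  | succ r ih =>
    intro e hcard hne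
    -- pick an active slot
    have hA : ∃ a, a ∈ Act K L e := by
      obtain ⟨u, hu⟩ := Finsupp.ne_iff.mp hne
      rcases u with a | a
      · exact ⟨a, (mem_Act K L).mpr (Or.inl (by simpa using hu))⟩
      · exact ⟨a, (mem_Act K L).mpr (Or.inr (by simpa using hu))⟩
    obtain ⟨a, ha⟩ := hA
    set v : ℕ × ℕ := (e (Sum.inl a), e (Sum.inr a)) with hv
    have hvne : v ≠ (0, 0) := by
      intro h
      rcases (mem_Act K L).mp ha with h1 | h1
      · exact h1 (by rw [hv] at h; exact congrArg Prod.fst h)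
      · exact h1 (by rw [hv] at h; exact congrArg Prod.snd h)
    have hle : pAt K L v a ≤ e := by
      rw [Finsupp.le_def]
      intro u
      rcases u with b | b <;>
        simp only [pAt, Finsupp.add_apply, Finsupp.single_apply] <;>
        split_ifs with h <;> simp_all
    set f := e - pAt K L v a with hf
    have hef : f + pAt K L v a = e := tsub_add_cancel_of_le hle
    have hfal : f (Sum.inl a) = 0 := by
      rw [hf, Finsupp.tsub_apply, pAt_inl, hv]
      exact Nat.sub_self _
    have hfar : f (Sum.inr a) = 0 := by
      rw [hf, Finsupp.tsub_apply, pAt_inr, hv]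
      exact Nat.sub_self _
    have hanotf : a ∉ Act K L f := by
      rw [mem_Act]
      push_neg
      exact ⟨hfal, hfar⟩
    have hActf : Act K L f ⊆ (Act K L e).erase a := by
      intro b hb
      rw [Finset.mem_erase]
      constructor
      · intro hba
        exact hanotf (hba ▸ hb)
      · rcases (mem_Act K L).mp hb with h1 | h1
        · refine (mem_Act K L).mpr (Or.inl (fun h2 => h1 ?_))
          have := Finsupp.tsub_apply e (pAt K L v a) (Sum.inl b)
          rw [← hf] at this
          omega
        · refine (mem_Act K L).mpr (Or.inr (fun h2 => h1 ?_))
          have := Finsupp.tsub_apply e (pAt K L v a) (Sum.inr b)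
          rw [← hf] at this
          omega
    have hcardf : (Act K L f).card ≤ r := by
      have h1 := Finset.card_le_card hActf
      have h2 := Finset.card_erase_of_mem ha
      omega
    -- the key identity
    have hkey := Tsym_mul K L v f
    -- split the right side into active and inactive slots
    have hconst : (∑ i ∈ Finset.univ \ Act K L f, Tsym K L (f + pAt K L v i)) =
        (Finset.univ \ Act K L f).card • Tsym K L e := by
      rw [← hef, ← Finset.sum_const]
      refine Finset.sum_congr rfl (fun i hi => ?_)
      exact (Tsym_indep K L v f a i hanotf (Finset.mem_sdiff.mp hi).2).symm
    have hsplit : (∑ i, Tsym K L (f + pAt K L v i)) =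
        (∑ i ∈ Act K L f, Tsym K L (f + pAt K L v i)) +
        (Finset.univ \ Act K L f).card • Tsym K L e := by
      rw [← Finset.sum_sdiff (Finset.subset_univ (Act K L f)), hconst]
      exact add_comm _ _
    -- apply DP (·) Delta
    have hDPprod : DP ((∑ i, monomial (pAt K L v i) (1:ℚ)) * Tsym K L f)
        (Delta K L) = 0 := by
      rw [mul_comm, DP_mul, psum_kills K L v hvne, DP_zero_right]
    rw [hkey, hsplit] at hDPprod
    rw [DP_add_left] at hDPprod
    have hact0 : DP (∑ i ∈ Act K L f, Tsym K L (f + pAt K L v i)) (Delta K L) = 0 := by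
      rw [DP_sum_left]
      refine Finset.sum_eq_zero (fun i hi => ?_)
      refine ih (f + pAt K L v i) ?_ ?_
      · refine le_trans (Finset.card_le_card (fun b hb => ?_)) hcardf
        rcases (mem_Act K L).mp hb with h1 | h1
        · by_cases hbi : b = i
          · exact hbi ▸ hi
          · refine (mem_Act K L).mpr (Or.inl (fun h2 => h1 ?_))
            simp only [Finsupp.add_apply, h2, pAt, Finsupp.single_apply]
            rw [if_neg (by simp [Ne.symm hbi]), if_neg (by simp)]
            simp
        · by_cases hbi : b = i
          · exact hbi ▸ hi
          · refine (mem_Act K L).mpr (Or.inr (fun h2 => h1 ?_))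
            simp only [Finsupp.add_apply, h2, pAt, Finsupp.single_apply]
            rw [if_neg (by simp), if_neg (by simp [Ne.symm hbi])]
            simp
      · intro h0
        rcases (mem_Act K L).mp hi with h1 | h1
        · have := congrArg (fun (g : (Fin (K+L+1) ⊕ Fin (K+L+1)) →₀ ℕ) =>
            g (Sum.inl i)) h0
          simp only [Finsupp.add_apply, Finsupp.coe_zero, Pi.zero_apply] at this
          omega
        · have := congrArg (fun (g : (Fin (K+L+1) ⊕ Fin (K+L+1)) →₀ ℕ) =>
            g (Sum.inr i)) h0
          simp only [Finsupp.add_apply, Finsupp.coe_zero, Pi.zero_apply] at this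
          omega
    rw [hact0, zero_add] at hDPprod
    -- divide by the positive number of inactive slots
    have hNpos : 0 < (Finset.univ \ Act K L f).card :=
      Finset.card_pos.mpr ⟨a, Finset.mem_sdiff.mpr ⟨Finset.mem_univ a, hanotf⟩⟩
    rw [← Nat.cast_smul_eq_nsmul ℚ, DP_smul_left] at hDPprod
    have hc : (((Finset.univ \ Act K L f).card : ℕ) : ℚ) ≠ 0 := by
      have : (Finset.univ \ Act K L f).card ≠ 0 := Nat.pos_iff_ne_zero.mp hNpos
      exact_mod_cast this
    have hrw : DP (Tsym K L e) (Delta K L) =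
        ((((Finset.univ \ Act K L f).card : ℕ) : ℚ))⁻¹ •
          ((((Finset.univ \ Act K L f).card : ℕ) : ℚ) •
            DP (Tsym K L e) (Delta K L)) := by
      rw [smul_smul, inv_mul_cancel₀ hc, one_smul]
    rw [hrw, hDPprod, smul_zero]

end HookSec

open HookOp in
/-- Every polynomial which is homogeneous of positive degree and invariant under the
diagonal action of `S_n` (acting simultaneously on the `x` and `y` variables)
annihilates `Δ_μ` as a differential operator. -/
theorem stmt4 (K L : ℕ) (P : MvPolynomial (Fin (K + L + 1) ⊕ Fin (K + L + 1)) ℚ)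
    (m : ℕ) (hm : 0 < m) (hhom : P.IsHomogeneous m)
    (hsym : ∀ σ : Equiv.Perm (Fin (K + L + 1)), rename (Sum.map ⇑σ ⇑σ) P = P) :
    DP P (Delta K L) = 0 := by
  classical
  have hrename : ∀ σ : Equiv.Perm (Fin (K+L+1)), rename (Sum.map ⇑σ ⇑σ) P =
      ∑ e ∈ P.support, monomial (act K L σ e) (coeff e P) := by
    intro σ
    conv_lhs => rw [← support_sum_monomial_coeff P]
    rw [map_sum]
    exact Finset.sum_congr rfl (fun e _ => by rw [rename_monomial]; rfl)
  have hcardsum : ((Fintype.card (Equiv.Perm (Fin (K+L+1))) : ℕ) : ℚ) • P =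
      ∑ σ : Equiv.Perm (Fin (K+L+1)), rename (Sum.map ⇑σ ⇑σ) P := by
    rw [Finset.sum_congr rfl (fun σ _ => hsym σ), Finset.sum_const,
      Finset.card_univ, ← Nat.cast_smul_eq_nsmul ℚ]
  have hswap : (∑ σ : Equiv.Perm (Fin (K+L+1)), rename (Sum.map ⇑σ ⇑σ) P) =
      ∑ e ∈ P.support, coeff e P • Tsym K L e := by
    rw [Finset.sum_congr rfl (fun σ _ => hrename σ), Finset.sum_comm]
    refine Finset.sum_congr rfl (fun e _ => ?_)
    rw [Tsym, Finset.smul_sum]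
    exact Finset.sum_congr rfl (fun σ _ => by rw [smul_monomial, smul_eq_mul, mul_one])
  have h0 : DP (((Fintype.card (Equiv.Perm (Fin (K+L+1))) : ℕ) : ℚ) • P)
      (Delta K L) = 0 := by
    rw [hcardsum, hswap, DP_sum_left]
    refine Finset.sum_eq_zero (fun e he => ?_)
    have hene : e ≠ 0 := by
      rintro rfl
      have h := hhom (MvPolynomial.mem_support_iff.mp he)
      simp at h
      omega
    rw [DP_smul_left, Tkill K L (Act K L e).card e le_rfl hene, smul_zero]
  rw [DP_smul_left] at h0
  have hc : ((Fintype.card (Equiv.Perm (Fin (K+L+1))) : ℕ) : ℚ) ≠ 0 := by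
    have : Fintype.card (Equiv.Perm (Fin (K+L+1))) ≠ 0 := Fintype.card_ne_zero
    exact_mod_cast this
  have hrw : DP P (Delta K L) =
      (((Fintype.card (Equiv.Perm (Fin (K+L+1))) : ℕ) : ℚ))⁻¹ •
        (((Fintype.card (Equiv.Perm (Fin (K+L+1))) : ℕ) : ℚ) •
          DP P (Delta K L)) := by
    rw [smul_smul, inv_mul_cancel₀ hc, one_smul]
  rw [hrw, h0, smul_zero]
end
end

section
/- The set 𝒟 of dessins attached to the hook partition μ = (K+1,1^L) has cardinality n! = (K+L+1)!. -/
open MvPolynomial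

noncomputable section

/-- The size (height for a `y`-column, depth for an `x`-column) of the column at
place `i` of a dessin with column types `isY` : the `j`-th `y`-column from the left
has height `K+1-j`, and the `j`-th `x`-column from the left has depth `L+1-j`. -/
def colSize (K L : ℕ) (isY : Fin (K + L) → Bool) (i : Fin (K + L)) : ℕ :=
  if isY i then K - (Finset.univ.filter fun j => j < i ∧ isY j = true).card
  else L - (Finset.univ.filter fun j => j < i ∧ isY j = false).card

/-- A column is plain ('unie') if it contains only crosses or only blank cells. -/
def Plain (K L : ℕ) (isY : Fin (K + L) → Bool) (cross : Fin (K + L) → ℕ)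
    (j : Fin (K + L)) : Prop :=
  cross j = 0 ∨ cross j = colSize K L isY j

/-- A dessin attached to the hook `μ = (K+1,1^L)` : at each of the `K+L` places there
is a `y`-column (`isY i = true`) or an `x`-column (`isY i = false`), with `K` many
`y`-columns; the column at place `i` carries `cross i` crosses, at most its size; and
for each `y`-column, the leftmost plain `x`-column to its right (if any) dictates:
if it has no crosses the `y`-column has at least one cross, and if it is full of
crosses the `y`-column has at least one blank cell. -/
structure Dessin (K L : ℕ) where
  isY : Fin (K + L) → Bool
  cross : Fin (K + L) → ℕ
  card_isY : (Finset.univ.filter fun i => isY i = true).card = K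
  cross_le : ∀ i, cross i ≤ colSize K L isY i
  rule : ∀ i j : Fin (K + L), isY i = true → isY j = false → i < j →
    Plain K L isY cross j →
    (∀ j', i < j' → j' < j → isY j' = false → ¬ Plain K L isY cross j') →
    ((cross j = 0 → 1 ≤ cross i) ∧
     (cross j = colSize K L isY j → cross i < colSize K L isY i))

set_option linter.unnecessarySeqFocus false

namespace DessinCount

variable {m n K L : ℕ}

def colSize' (K L : ℕ) {n : ℕ} (isY : Fin n → Bool) (i : Fin n) : ℕ :=
  if isY i then K - (Finset.univ.filter fun j => j < i ∧ isY j = true).card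
  else L - (Finset.univ.filter fun j => j < i ∧ isY j = false).card

def Plain' (K L : ℕ) {n : ℕ} (isY : Fin n → Bool) (cross : Fin n → ℕ)
    (j : Fin n) : Prop :=
  cross j = 0 ∨ cross j = colSize' K L isY j

def Good (K L : ℕ) {n : ℕ} (isY : Fin n → Bool) (cross : Fin n → ℕ) : Prop :=
  ((Finset.univ.filter fun i => isY i = true).card = K) ∧
  (∀ i, cross i ≤ colSize' K L isY i) ∧
  (∀ i j, isY i = true → isY j = false → i < j →
    Plain' K L isY cross j →
    (∀ j', i < j' → j' < j → isY j' = false → ¬ Plain' K L isY cross j') →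
    ((cross j = 0 → 1 ≤ cross i) ∧
     (cross j = colSize' K L isY j → cross i < colSize' K L isY i)))

def D' (K L n : ℕ) : Type :=
  {p : (Fin n → Bool) × (Fin n → ℕ) // Good K L p.1 p.2}

lemma colSize'_le (isY : Fin n → Bool) (i : Fin n) : colSize' K L isY i ≤ K + L := by
  unfold colSize'; split <;> omega

instance : Finite (D' K L n) := by
  have hinj : Function.Injective (fun p : D' K L n =>
      ((p.1.1, fun i => (⟨min (p.1.2 i) (K + L), by omega⟩ : Fin (K + L + 1))) :
        (Fin n → Bool) × (Fin n → Fin (K + L + 1)))) := by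
    rintro ⟨⟨a, b⟩, hp⟩ ⟨⟨c, d⟩, hq⟩ h
    simp only [Prod.mk.injEq] at h
    obtain ⟨h1, h2⟩ := h
    apply Subtype.ext
    simp only [Prod.mk.injEq]
    refine ⟨h1, funext fun i => ?_⟩
    have hb : b i ≤ K + L := (hp.2.1 i).trans (colSize'_le _ _)
    have hd : d i ≤ K + L := (hq.2.1 i).trans (colSize'_le _ _)
    have h3 := congrFun h2 i
    simp only [Fin.mk.injEq] at h3
    omega
  exact Finite.of_injective _ hinj

lemma card_filter_succ (p : Fin (m + 1) → Prop) [DecidablePred p] :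
    (Finset.univ.filter p).card
      = (if p 0 then 1 else 0) + (Finset.univ.filter fun j : Fin m => p j.succ).card := by
  rw [Finset.card_filter, Finset.card_filter, Fin.sum_univ_succ]

lemma count_shift (isY : Fin (m + 1) → Bool) (b : Bool) (i : Fin m) :
    (Finset.univ.filter fun j : Fin (m + 1) => j < i.succ ∧ isY j = b).card
      = (if isY 0 = b then 1 else 0)
        + (Finset.univ.filter fun j : Fin m => j < i ∧ isY j.succ = b).card := by
  rw [card_filter_succ]
  simp [Fin.succ_pos, Fin.succ_lt_succ_iff]

lemma count_total (isY : Fin (m + 1) → Bool) (b : Bool) :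
    (Finset.univ.filter fun j : Fin (m + 1) => isY j = b).card
      = (if isY 0 = b then 1 else 0)
        + (Finset.univ.filter fun j : Fin m => isY j.succ = b).card :=
  card_filter_succ _

lemma colSize'_succ_x (isY : Fin (m + 1) → Bool) (h0 : isY 0 = false) (i : Fin m) :
    colSize' K (L + 1) isY i.succ = colSize' K L (fun j => isY j.succ) i := by
  unfold colSize'
  rw [count_shift isY true i, count_shift isY false i, h0]
  rcases h : isY i.succ with _ | _ <;> simp [h] <;> omega

lemma colSize'_succ_y (isY : Fin (m + 1) → Bool) (h0 : isY 0 = true) (i : Fin m) :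
    colSize' (K + 1) L isY i.succ = colSize' K L (fun j => isY j.succ) i := by
  unfold colSize'
  rw [count_shift isY true i, count_shift isY false i, h0]
  rcases h : isY i.succ with _ | _ <;> simp [h] <;> omega

lemma plain'_succ_x (isY : Fin (m + 1) → Bool) (cross : Fin (m + 1) → ℕ)
    (h0 : isY 0 = false) (j : Fin m) :
    Plain' K (L + 1) isY cross j.succ
      ↔ Plain' K L (fun i => isY i.succ) (fun i => cross i.succ) j := by
  unfold Plain'
  rw [colSize'_succ_x isY h0 j]

lemma plain'_succ_y (isY : Fin (m + 1) → Bool) (cross : Fin (m + 1) → ℕ)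
    (h0 : isY 0 = true) (j : Fin m) :
    Plain' (K + 1) L isY cross j.succ
      ↔ Plain' K L (fun i => isY i.succ) (fun i => cross i.succ) j := by
  unfold Plain'
  rw [colSize'_succ_y isY h0 j]

lemma colSize'_zero (isY : Fin (m + 1) → Bool) :
    colSize' K L isY 0 = if isY 0 then K else L := by
  unfold colSize'
  simp

-- ## tail lemmas

lemma good_tail_x {isY : Fin (m + 1) → Bool} {cross : Fin (m + 1) → ℕ}
    (h0 : isY 0 = false) (hg : Good K (L + 1) isY cross) :
    Good K L (fun i => isY i.succ) (fun i => cross i.succ) := by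
  obtain ⟨hcard, hle, hrule⟩ := hg
  refine ⟨?_, ?_, ?_⟩
  · rw [count_total isY true, h0] at hcard
    simpa using hcard
  · intro i
    rw [← colSize'_succ_x isY h0 i]
    exact hle i.succ
  · intro i j hi hj hij hp hbet
    have hp' : Plain' K (L + 1) isY cross j.succ := (plain'_succ_x isY cross h0 j).mpr hp
    have hbet' : ∀ j', i.succ < j' → j' < j.succ → isY j' = false →
        ¬ Plain' K (L + 1) isY cross j' := by
      intro j' h1 h2 h3
      rcases Fin.eq_zero_or_eq_succ j' with rfl | ⟨j'', rfl⟩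
      · exact absurd h1 (Fin.not_lt_zero _)
      · rw [plain'_succ_x isY cross h0 j'']
        exact hbet j'' (Fin.succ_lt_succ_iff.mp h1) (Fin.succ_lt_succ_iff.mp h2) h3
    have h := hrule i.succ j.succ hi hj (Fin.succ_lt_succ_iff.mpr hij) hp' hbet'
    rw [colSize'_succ_x isY h0 i, colSize'_succ_x isY h0 j] at h
    exact h

lemma good_tail_y {isY : Fin (m + 1) → Bool} {cross : Fin (m + 1) → ℕ}
    (h0 : isY 0 = true) (hg : Good (K + 1) L isY cross) :
    Good K L (fun i => isY i.succ) (fun i => cross i.succ) := by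
  obtain ⟨hcard, hle, hrule⟩ := hg
  refine ⟨?_, ?_, ?_⟩
  · rw [count_total isY true, h0] at hcard
    simp at hcard ⊢
    omega
  · intro i
    rw [← colSize'_succ_y isY h0 i]
    exact hle i.succ
  · intro i j hi hj hij hp hbet
    have hp' : Plain' (K + 1) L isY cross j.succ := (plain'_succ_y isY cross h0 j).mpr hp
    have hbet' : ∀ j', i.succ < j' → j' < j.succ → isY j' = false →
        ¬ Plain' (K + 1) L isY cross j' := by
      intro j' h1 h2 h3
      rcases Fin.eq_zero_or_eq_succ j' with rfl | ⟨j'', rfl⟩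
      · exact absurd h1 (Fin.not_lt_zero _)
      · rw [plain'_succ_y isY cross h0 j'']
        exact hbet j'' (Fin.succ_lt_succ_iff.mp h1) (Fin.succ_lt_succ_iff.mp h2) h3
    have h := hrule i.succ j.succ hi hj (Fin.succ_lt_succ_iff.mpr hij) hp' hbet'
    rw [colSize'_succ_y isY h0 i, colSize'_succ_y isY h0 j] at h
    exact h

-- ## cons lemmas

lemma colSize'_cons_x (isY : Fin m → Bool) (c : ℕ) (cross : Fin m → ℕ) (i : Fin m) :
    colSize' K (L + 1) (Fin.cons false isY) i.succ = colSize' K L isY i := by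
  have h := colSize'_succ_x (K := K) (L := L) (Fin.cons false isY) (by simp) i
  simpa using h

lemma colSize'_cons_y (isY : Fin m → Bool) (c : ℕ) (cross : Fin m → ℕ) (i : Fin m) :
    colSize' (K + 1) L (Fin.cons true isY) i.succ = colSize' K L isY i := by
  have h := colSize'_succ_y (K := K) (L := L) (Fin.cons true isY) (by simp) i
  simpa using h

lemma plain'_cons_x (isY : Fin m → Bool) (c : ℕ) (cross : Fin m → ℕ) (j : Fin m) :
    Plain' K (L + 1) (Fin.cons false isY) (Fin.cons c cross) j.succ
      ↔ Plain' K L isY cross j := by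
  have h := plain'_succ_x (K := K) (L := L) (Fin.cons false isY) (Fin.cons c cross) (by simp) j
  simpa using h

lemma plain'_cons_y (isY : Fin m → Bool) (c : ℕ) (cross : Fin m → ℕ) (j : Fin m) :
    Plain' (K + 1) L (Fin.cons true isY) (Fin.cons c cross) j.succ
      ↔ Plain' K L isY cross j := by
  have h := plain'_succ_y (K := K) (L := L) (Fin.cons true isY) (Fin.cons c cross) (by simp) j
  simpa using h


lemma good_cons_x {isY : Fin m → Bool} {cross : Fin m → ℕ} {c : ℕ}
    (hg : Good K L isY cross) (hc : c ≤ L + 1) :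
    Good K (L + 1) (Fin.cons false isY) (Fin.cons c cross) := by
  obtain ⟨hcard, hle, hrule⟩ := hg
  refine ⟨?_, ?_, ?_⟩
  · rw [count_total (Fin.cons false isY) true]
    simp [hcard]
  · intro i
    rcases Fin.eq_zero_or_eq_succ i with rfl | ⟨i', rfl⟩
    · rw [colSize'_zero]
      simpa using hc
    · rw [colSize'_cons_x isY c cross]
      simpa using hle i'
  · intro i j hi hj hij hp hbet
    rcases Fin.eq_zero_or_eq_succ j with rfl | ⟨j', rfl⟩
    · exact absurd hij (Fin.not_lt_zero _)
    rcases Fin.eq_zero_or_eq_succ i with rfl | ⟨i', rfl⟩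
    · simp at hi
    have hp' : Plain' K L isY cross j' := (plain'_cons_x isY c cross j').mp hp
    have hbet' : ∀ j'', i' < j'' → j'' < j' → isY j'' = false →
        ¬ Plain' K L isY cross j'' := by
      intro j'' h1 h2 h3 hplain
      exact hbet j''.succ (Fin.succ_lt_succ_iff.mpr h1) (Fin.succ_lt_succ_iff.mpr h2)
        (by simpa using h3) ((plain'_cons_x isY c cross j'').mpr hplain)
    have h := hrule i' j' (by simpa using hi) (by simpa using hj)
      (Fin.succ_lt_succ_iff.mp hij) hp' hbet'
    simpa [colSize'_cons_x isY c cross] using h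

/-- The allowed numbers of crosses for a `y`-column of height `K+1` placed in front
of a dessin-body with parameters `(K, L)`. -/
def HeadOK (K L : ℕ) {m : ℕ} (isY : Fin m → Bool) (cross : Fin m → ℕ) (c : ℕ) : Prop :=
  c ≤ K + 1 ∧
  ∀ j, isY j = false → Plain' K L isY cross j →
    (∀ j', j' < j → isY j' = false → ¬ Plain' K L isY cross j') →
    ((cross j = 0 → 1 ≤ c) ∧ (cross j = colSize' K L isY j → c < K + 1))

lemma good_cons_y {isY : Fin m → Bool} {cross : Fin m → ℕ} {c : ℕ}
    (hg : Good K L isY cross) (hc : HeadOK K L isY cross c) :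
    Good (K + 1) L (Fin.cons true isY) (Fin.cons c cross) := by
  obtain ⟨hcard, hle, hrule⟩ := hg
  refine ⟨?_, ?_, ?_⟩
  · rw [count_total (Fin.cons true isY) true]
    simp [hcard, add_comm]
  · intro i
    rcases Fin.eq_zero_or_eq_succ i with rfl | ⟨i', rfl⟩
    · rw [colSize'_zero]
      simpa using hc.1
    · rw [colSize'_cons_y isY c cross]
      simpa using hle i'
  · intro i j hi hj hij hp hbet
    rcases Fin.eq_zero_or_eq_succ j with rfl | ⟨j', rfl⟩
    · exact absurd hij (Fin.not_lt_zero _)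
    rcases Fin.eq_zero_or_eq_succ i with rfl | ⟨i', rfl⟩
    · -- head column: use HeadOK
      have hp' : Plain' K L isY cross j' := (plain'_cons_y isY c cross j').mp hp
      have hbet' : ∀ j'', j'' < j' → isY j'' = false → ¬ Plain' K L isY cross j'' := by
        intro j'' h2 h3 hplain
        exact hbet j''.succ (Fin.succ_pos _) (Fin.succ_lt_succ_iff.mpr h2)
          (by simpa using h3) ((plain'_cons_y isY c cross j'').mpr hplain)
      have h := hc.2 j' (by simpa using hj) hp' hbet'
      rw [colSize'_zero]
      simpa [colSize'_cons_y isY c cross] using h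
    · have hp' : Plain' K L isY cross j' := (plain'_cons_y isY c cross j').mp hp
      have hbet' : ∀ j'', i' < j'' → j'' < j' → isY j'' = false →
          ¬ Plain' K L isY cross j'' := by
        intro j'' h1 h2 h3 hplain
        exact hbet j''.succ (Fin.succ_lt_succ_iff.mpr h1) (Fin.succ_lt_succ_iff.mpr h2)
          (by simpa using h3) ((plain'_cons_y isY c cross j'').mpr hplain)
      have h := hrule i' j' (by simpa using hi) (by simpa using hj)
        (Fin.succ_lt_succ_iff.mp hij) hp' hbet'
      simpa [colSize'_cons_y isY c cross] using h

lemma headOK_of_good {isY : Fin (m + 1) → Bool} {cross : Fin (m + 1) → ℕ}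
    (h0 : isY 0 = true) (hg : Good (K + 1) L isY cross) :
    HeadOK K L (fun i => isY i.succ) (fun i => cross i.succ) (cross 0) := by
  constructor
  · have h := hg.2.1 0
    rwa [colSize'_zero, h0, if_pos rfl] at h
  · intro j hjx hjp hjmin
    have hp' : Plain' (K + 1) L isY cross j.succ := (plain'_succ_y isY cross h0 j).mpr hjp
    have hbet' : ∀ j', (0 : Fin (m + 1)) < j' → j' < j.succ → isY j' = false →
        ¬ Plain' (K + 1) L isY cross j' := by
      intro j' h1 h2 h3
      rcases Fin.eq_zero_or_eq_succ j' with rfl | ⟨j'', rfl⟩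
      · exact absurd h1 (lt_irrefl _)
      · rw [plain'_succ_y isY cross h0 j'']
        exact hjmin j'' (Fin.succ_lt_succ_iff.mp h2) h3
    have h := hg.2.2 0 j.succ h0 hjx (Fin.succ_pos _) hp' hbet'
    rw [colSize'_succ_y isY h0 j, colSize'_zero, h0, if_pos rfl] at h
    exact h


def equivX (K L m : ℕ) :
    {d : D' K (L + 1) (m + 1) // d.1.1 0 = false} ≃ Fin (L + 2) × D' K L m where
  toFun d := (⟨d.1.1.2 0, by
      have h := d.1.2.2.1 0
      rw [colSize'_zero, d.2] at h
      simp only [Bool.false_eq_true, if_false] at h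
      omega⟩,
    ⟨(fun i => d.1.1.1 i.succ, fun i => d.1.1.2 i.succ), good_tail_x d.2 d.1.2⟩)
  invFun ct := ⟨⟨(Fin.cons false ct.2.1.1, Fin.cons (ct.1 : ℕ) ct.2.1.2),
      good_cons_x ct.2.2 (Nat.lt_succ_iff.mp ct.1.2)⟩, by simp⟩
  left_inv d := by
    obtain ⟨⟨⟨a, b⟩, hg⟩, h0⟩ := d
    apply Subtype.ext
    apply Subtype.ext
    simp only [Prod.mk.injEq]
    constructor <;> funext i <;>
      rcases Fin.eq_zero_or_eq_succ i with rfl | ⟨i', rfl⟩ <;> simp [h0.symm]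
  right_inv ct := by
    obtain ⟨c, ⟨⟨a, b⟩, hg⟩⟩ := ct
    refine Prod.ext ?_ ?_
    · apply Fin.ext
      simp
    · apply Subtype.ext
      simp only [Prod.mk.injEq]
      constructor <;> funext i <;> simp

lemma sigma_subtype_ext {α : Type*} {P : α → ℕ → Prop} :
    ∀ {p q : Σ t : α, {c : ℕ // P t c}}, p.1 = q.1 → (p.2 : ℕ) = (q.2 : ℕ) → p = q := by
  rintro ⟨t, c, hc⟩ ⟨t', c', hc'⟩ h1 h2
  dsimp only at h1 h2
  subst h1
  subst h2
  rfl

def equivY (K L m : ℕ) :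
    {d : D' (K + 1) L (m + 1) // d.1.1 0 = true} ≃
      Σ _t : D' K L m, {c : ℕ // HeadOK K L _t.1.1 _t.1.2 c} where
  toFun d := ⟨⟨(fun i => d.1.1.1 i.succ, fun i => d.1.1.2 i.succ), good_tail_y d.2 d.1.2⟩,
    ⟨d.1.1.2 0, headOK_of_good d.2 d.1.2⟩⟩
  invFun tc := ⟨⟨(Fin.cons true tc.1.1.1, Fin.cons tc.2.1 tc.1.1.2),
      good_cons_y tc.1.2 tc.2.2⟩, by simp⟩
  left_inv d := by
    obtain ⟨⟨⟨a, b⟩, hg⟩, h0⟩ := d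
    apply Subtype.ext
    apply Subtype.ext
    simp only [Prod.mk.injEq]
    constructor <;> funext i <;>
      rcases Fin.eq_zero_or_eq_succ i with rfl | ⟨i', rfl⟩ <;> simp [h0.symm]
  right_inv tc := by
    obtain ⟨⟨⟨a, b⟩, hg⟩, ⟨c, hc⟩⟩ := tc
    apply sigma_subtype_ext
    · apply Subtype.ext
      simp only [Prod.mk.injEq]
      constructor <;> funext i <;> simp
    · simp


lemma card_x {isY : Fin m → Bool} {cross : Fin m → ℕ}
    (hg : Good K L isY cross) (hm : m = K + L) :
    (Finset.univ.filter fun j : Fin m => isY j = false).card = L := by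
  have h2 := Finset.card_filter_add_card_filter_not
    (s := (Finset.univ : Finset (Fin m))) (p := fun j => isY j = true)
  simp only [Bool.not_eq_true, Finset.card_univ, Fintype.card_fin] at h2
  have h1 := hg.1
  omega

lemma count_lt_of_x {isY : Fin m → Bool} {cross : Fin m → ℕ} {j : Fin m}
    (hg : Good K L isY cross) (hm : m = K + L) (hj : isY j = false) :
    (Finset.univ.filter fun j' : Fin m => j' < j ∧ isY j' = false).card < L := by
  have hsub : (Finset.univ.filter fun j' : Fin m => j' < j ∧ isY j' = false)
      ⊂ (Finset.univ.filter fun j' : Fin m => isY j' = false) := by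
    rw [Finset.ssubset_iff_of_subset]
    · exact ⟨j, by simp [hj], by simp⟩
    · intro x hx
      simp only [Finset.mem_filter] at hx ⊢
      exact ⟨hx.1, hx.2.2⟩
  have h := Finset.card_lt_card hsub
  rwa [card_x hg hm] at h

lemma colSize'_x_pos {isY : Fin m → Bool} {cross : Fin m → ℕ} {j : Fin m}
    (hg : Good K L isY cross) (hm : m = K + L) (hj : isY j = false) :
    1 ≤ colSize' K L isY j := by
  have h := count_lt_of_x hg hm hj
  unfold colSize'
  rw [hj]
  simp only [Bool.false_eq_true, if_false]
  omega

lemma exists_plain_x {isY : Fin m → Bool} {cross : Fin m → ℕ}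
    (hg : Good K L isY cross) (hm : m = K + L) (hL : 0 < L) :
    ∃ j, isY j = false ∧ Plain' K L isY cross j := by
  classical
  set s := Finset.univ.filter (fun j : Fin m => isY j = false) with hs
  have hsne : s.Nonempty := by
    rw [← Finset.card_pos, hs, card_x hg hm]
    exact hL
  set jx := s.max' hsne with hjx
  have hmem : isY jx = false := (Finset.mem_filter.mp (s.max'_mem hsne)).2
  have hcnt : (Finset.univ.filter fun j' : Fin m => j' < jx ∧ isY j' = false).card
      = L - 1 := by
    have he : (Finset.univ.filter fun j' : Fin m => j' < jx ∧ isY j' = false)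
        = s.erase jx := by
      ext j'
      simp only [Finset.mem_filter, Finset.mem_univ, true_and, Finset.mem_erase, hs]
      constructor
      · rintro ⟨h1, h2⟩
        exact ⟨ne_of_lt h1, h2⟩
      · rintro ⟨h1, h2⟩
        refine ⟨lt_of_le_of_ne (s.le_max' j' ?_) h1, h2⟩
        rw [hs]
        simp [h2]
    rw [he, Finset.card_erase_of_mem (s.max'_mem hsne)]
    rw [hs, card_x hg hm]
  have hsz : colSize' K L isY jx = 1 := by
    unfold colSize'
    rw [hmem]
    simp only [Bool.false_eq_true, if_false]
    rw [hcnt]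
    omega
  have hle := hg.2.1 jx
  rw [hsz] at hle
  refine ⟨jx, hmem, ?_⟩
  unfold Plain'
  rw [hsz]
  omega

lemma fiber_equiv_pos {isY : Fin m → Bool} {cross : Fin m → ℕ}
    (hg : Good K L isY cross) (hm : m = K + L) (hL : 0 < L) :
    Nonempty ({c : ℕ // HeadOK K L isY cross c} ≃ Fin (K + 1)) := by
  classical
  set S := Finset.univ.filter
    (fun j : Fin m => isY j = false ∧ Plain' K L isY cross j) with hS
  have hSne : S.Nonempty := by
    obtain ⟨j, h1, h2⟩ := exists_plain_x hg hm hL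
    exact ⟨j, by simp [hS, h1, h2]⟩
  set j0 := S.min' hSne with hj0def
  have hj0 : isY j0 = false ∧ Plain' K L isY cross j0 :=
    (Finset.mem_filter.mp (S.min'_mem hSne)).2
  set v := if cross j0 = 0 then 0 else K + 1 with hv
  have hvlt : v < K + 2 := by rw [hv]; split <;> omega
  have hiff : ∀ c, HeadOK K L isY cross c ↔ c ∈ (Finset.range (K + 2)).erase v := by
    intro c
    rw [Finset.mem_erase, Finset.mem_range]
    constructor
    · rintro ⟨h1, h2⟩
      have hmin : ∀ j', j' < j0 → isY j' = false → ¬ Plain' K L isY cross j' := by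
        intro j' hlt hx hplain
        have hle := S.min'_le j' (by simp [hS, hx, hplain])
        exact absurd hle (not_le.mpr hlt)
      have h := h2 j0 hj0.1 hj0.2 hmin
      rcases hj0.2 with hc0 | hcf
      · have := h.1 hc0
        rw [hv, if_pos hc0]
        exact ⟨by omega, by omega⟩
      · have hpos := colSize'_x_pos hg hm hj0.1
        have hne : cross j0 ≠ 0 := by omega
        have := h.2 hcf
        rw [hv, if_neg hne]
        exact ⟨by omega, by omega⟩
    · rintro ⟨h2, h1⟩
      refine ⟨by omega, ?_⟩
      intro j hx hp hmin
      have hej : j = j0 := by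
        have hle : j0 ≤ j := S.min'_le j (by simp [hS, hx, hp])
        rcases lt_or_eq_of_le hle with hlt | heq
        · exact absurd hj0.2 (hmin j0 hlt hj0.1)
        · exact heq.symm
      subst hej
      constructor
      · intro h
        rw [hv, if_pos h] at h2
        omega
      · intro h
        have hpos := colSize'_x_pos hg hm hj0.1
        have hne : cross j0 ≠ 0 := by omega
        rw [hv, if_neg hne] at h2
        omega
  refine ⟨(Equiv.subtypeEquivRight hiff).trans
    ((Equiv.refl _).trans (Fintype.equivFinOfCardEq ?_))⟩
  rw [Fintype.card_coe, Finset.card_erase_of_mem (Finset.mem_range.mpr hvlt),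
    Finset.card_range]
  omega

lemma all_y_of_L_zero {isY : Fin m → Bool} {cross : Fin m → ℕ}
    (hg : Good K 0 isY cross) (hm : m = K + 0) (j : Fin m) : isY j = true := by
  have h := card_x hg hm
  rw [Finset.card_eq_zero] at h
  by_contra hc
  have : j ∈ Finset.univ.filter fun j : Fin m => isY j = false := by
    simp [Bool.not_eq_true] at hc
    simp [hc]
  rw [h] at this
  exact absurd this (Finset.notMem_empty j)

lemma fiber_equiv_zero {isY : Fin m → Bool} {cross : Fin m → ℕ}
    (hg : Good K 0 isY cross) (hm : m = K + 0) :
    Nonempty ({c : ℕ // HeadOK K 0 isY cross c} ≃ Fin (K + 2)) := by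
  have hiff : ∀ c, HeadOK K 0 isY cross c ↔ c ∈ Finset.range (K + 2) := by
    intro c
    rw [Finset.mem_range]
    constructor
    · rintro ⟨h1, _⟩
      omega
    · intro h
      refine ⟨by omega, ?_⟩
      intro j hj
      rw [all_y_of_L_zero hg hm j] at hj
      exact absurd hj (by simp)
  refine ⟨(Equiv.subtypeEquivRight hiff).trans (Fintype.equivFinOfCardEq ?_)⟩
  rw [Fintype.card_coe, Finset.card_range]


lemma all_x_of_K_zero {isY : Fin m → Bool} {cross : Fin m → ℕ}
    (hg : Good 0 L isY cross) (j : Fin m) : isY j = false := by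
  have h := hg.1
  rw [Finset.card_eq_zero] at h
  by_contra hc
  have hmem : j ∈ Finset.univ.filter fun j : Fin m => isY j = true := by
    simp only [Bool.not_eq_false] at hc
    simp [hc]
  rw [h] at hmem
  exact absurd hmem (Finset.notMem_empty j)

theorem card_D'_eq : ∀ n K L, K + L = n → Nat.card (D' K L n) = Nat.factorial (n + 1) := by
  intro n
  induction n with
  | zero =>
    intro K L h
    have hK : K = 0 := by omega
    have hL : L = 0 := by omega
    subst hK; subst hL
    have hne : Nonempty (D' 0 0 0) :=
      ⟨⟨(fun i => i.elim0, fun i => i.elim0), ⟨by simp, fun i => i.elim0, fun i => i.elim0⟩⟩⟩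
    have hsub : Subsingleton (D' 0 0 0) := ⟨fun p q => by
      apply Subtype.ext
      refine Prod.ext ?_ ?_ <;> funext i <;> exact i.elim0⟩
    rw [show Nat.factorial (0 + 1) = 1 from rfl, Nat.card_eq_one_iff_unique]
    exact ⟨hsub, hne⟩
  | succ m ih =>
    intro K L hKL
    have e0 := (Equiv.sumCompl (fun d : D' K L (m + 1) => d.1.1 0 = true)).symm
    rw [Nat.card_congr e0, Nat.card_sum]
    rcases K with _ | K'
    · -- no y-column at place 0
      have hA : IsEmpty {d : D' 0 L (m + 1) // d.1.1 0 = true} := ⟨fun d => by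
        have h := all_x_of_K_zero d.1.2 0
        rw [d.2] at h
        simp at h⟩
      have hL : L = m + 1 := by omega
      subst hL
      have eB : {d : D' 0 (m + 1) (m + 1) // ¬ d.1.1 0 = true} ≃ Fin (m + 2) × D' 0 m m :=
        (Equiv.subtypeEquivRight (fun d => by simp)).trans (equivX 0 m m)
      rw [Nat.card_of_isEmpty, Nat.card_congr eB, Nat.card_prod,
        Nat.card_eq_fintype_card (α := Fin (m + 2)),
        Fintype.card_fin, ih 0 m (by omega), Nat.factorial_succ (m + 1)]
      ring
    · have eA := equivY K' L m
      rcases L with _ | L'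
      · -- L = 0 : no x-column anywhere
        have hB : IsEmpty {d : D' (K' + 1) 0 (m + 1) // ¬ d.1.1 0 = true} :=
          ⟨fun d => d.2 (all_y_of_L_zero d.1.2 (by omega) 0)⟩
        have eA2 : {d : D' (K' + 1) 0 (m + 1) // d.1.1 0 = true} ≃ D' K' 0 m × Fin (K' + 2) :=
          eA.trans ((Equiv.sigmaCongrRight
            (fun t => Classical.choice (fiber_equiv_zero t.2 (by omega)))).trans
            (Equiv.sigmaEquivProd _ _))
        rw [Nat.card_congr eA2, Nat.card_prod, Nat.card_eq_fintype_card (α := Fin (K' + 2)),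
          Fintype.card_fin, ih K' 0 (by omega), Nat.card_of_isEmpty, Nat.factorial_succ (m + 1)]
        have hK : K' = m := by omega
        subst hK
        ring
      · -- K, L both positive
        have eA2 : {d : D' (K' + 1) (L' + 1) (m + 1) // d.1.1 0 = true}
            ≃ D' K' (L' + 1) m × Fin (K' + 1) :=
          eA.trans ((Equiv.sigmaCongrRight
            (fun t => Classical.choice (fiber_equiv_pos t.2 (by omega) (by omega)))).trans
            (Equiv.sigmaEquivProd _ _))
        have eB : {d : D' (K' + 1) (L' + 1) (m + 1) // ¬ d.1.1 0 = true}
            ≃ Fin (L' + 2) × D' (K' + 1) L' m :=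
          (Equiv.subtypeEquivRight (fun d => by simp)).trans (equivX (K' + 1) L' m)
        rw [Nat.card_congr eA2, Nat.card_congr eB, Nat.card_prod, Nat.card_prod,
          Nat.card_eq_fintype_card (α := Fin (K' + 1)), Nat.card_eq_fintype_card (α := Fin (L' + 2)),
          Fintype.card_fin, Fintype.card_fin, ih K' (L' + 1) (by omega),
          ih (K' + 1) L' (by omega), Nat.factorial_succ (m + 1)]
        have hs : (K' + 1) + (L' + 2) = m + 2 := by omega
        rw [← hs]
        ring

end DessinCount

def dessinEquiv (K L : ℕ) : Dessin K L ≃ DessinCount.D' K L (K + L) where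
  toFun d := ⟨(d.isY, d.cross), d.card_isY, d.cross_le, d.rule⟩
  invFun p := ⟨p.1.1, p.1.2, p.2.1, p.2.2.1, p.2.2.2⟩
  left_inv d := rfl
  right_inv p := rfl



/-- The set of dessins attached to the hook `μ = (K+1,1^L)` has cardinality
`n! = (K+L+1)!`. -/
theorem stmt10 (K L : ℕ) : Nat.card (Dessin K L) = Nat.factorial (K + L + 1) := by
  rw [Nat.card_congr (dessinEquiv K L), DessinCount.card_D'_eq (K + L) K L rfl]
end
end
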